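/- Let $P$ be a coalgebra without counit over a field $k$, and equip $k\ltimes_d P = k\oplus P$ with the comultiplication making it the Dorroh extension of the trivial coalgebra $k$ by $P$ (where $P$ has trivial $k$-comodule structures $\rho_l(p)=1\otimes p$, $\rho_r(p)=p\otimes 1$). Let $R$ be a coideal of $P$ and $x\in P\setminus R$ such that $\Delta(x)-x\otimes x\in R\otimes R$, and for all $p\in R$: $\Delta(p)-x\otimes p\in R\otimes(kx+R)$ and $\Delta(p)-p\otimes x\in(kx+R)\otimes R$. Then $T=k(1,x)+(\{0\}\times R)$ is a subcoalgebra of $k\ltimes_d P$. -/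

import Mathlib

open TensorProduct

/-- Coassociativity of a (not necessarily counital) comultiplication. -/
def Coassoc {k : Type*} [Field k] {V : Type*} [AddCommGroup V] [Module k V]
    (d : V →ₗ[k] V ⊗[k] V) : Prop :=
  (TensorProduct.assoc k V V V).toLinearMap ∘ₗ TensorProduct.map d LinearMap.id ∘ₗ d
    = TensorProduct.map LinearMap.id d ∘ₗ d

/-- The comultiplication of the counitization `k ⋉ P` of a non-counital coalgebra `P`:
`Δ(α,p) = α(1,0)⊗(1,0) + (1,0)⊗(0,p) + (0,p)⊗(1,0) + ∑(0,p₁)⊗(0,p₂)`. -/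
noncomputable def counitComul {k : Type*} [Field k] {P : Type*} [AddCommGroup P] [Module k P]
    (dP : P →ₗ[k] P ⊗[k] P) : (k × P) →ₗ[k] (k × P) ⊗[k] (k × P) :=
  LinearMap.toSpanSingleton k ((k × P) ⊗[k] (k × P))
      (((1 : k), (0 : P)) ⊗ₜ[k] ((1 : k), (0 : P))) ∘ₗ LinearMap.fst k k P
  + TensorProduct.mk k (k × P) (k × P) ((1 : k), (0 : P)) ∘ₗ
      LinearMap.inr k k P ∘ₗ LinearMap.snd k k P
  + (TensorProduct.mk k (k × P) (k × P)).flip ((1 : k), (0 : P)) ∘ₗ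
      LinearMap.inr k k P ∘ₗ LinearMap.snd k k P
  + TensorProduct.map (LinearMap.inr k k P) (LinearMap.inr k k P) ∘ₗ dP ∘ₗ LinearMap.snd k k P

section Aux

variable {k : Type*} [Field k] {P : Type*} [AddCommGroup P] [Module k P]

lemma counitComul_apply (dP : P →ₗ[k] P ⊗[k] P) (a : k) (p : P) :
    counitComul dP (a, p) = a • (((1:k),(0:P)) ⊗ₜ[k] ((1:k),(0:P)))
      + ((1:k),(0:P)) ⊗ₜ[k] ((0:k),p) + ((0:k),p) ⊗ₜ[k] ((1:k),(0:P))
      + TensorProduct.map (LinearMap.inr k k P) (LinearMap.inr k k P) (dP p) := by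
  simp [counitComul]

lemma exists_fun (R : Submodule k P) (x : P) (hx : x ∉ R) :
    ∃ f : P →ₗ[k] k, f x = 1 ∧ ∀ r ∈ R, f r = 0 := by
  obtain ⟨f, hf, hf'⟩ := R.exists_dual_map_eq_bot_of_notMem hx inferInstance
  refine ⟨(f x)⁻¹ • f, by simp [hf], fun r hr => ?_⟩
  have : f r = 0 := by
    have : f r ∈ R.map f := ⟨r, hr, rfl⟩
    simpa [hf'] using this
  simp [this]

lemma tmul_mem_range {Q : Type*} [AddCommGroup Q] [Module k Q] (T : Submodule k Q)
    {a b : Q} (ha : a ∈ T) (hb : b ∈ T) :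
    a ⊗ₜ[k] b ∈ LinearMap.range (TensorProduct.map T.subtype T.subtype) :=
  ⟨(⟨a, ha⟩ : T) ⊗ₜ[k] (⟨b, hb⟩ : T), by simp⟩

/-- If `w ∈ R ⊗ S` and `w ∈ S ⊗ R` (with `S = span x ⊔ R`, `x ∉ R`), then `w ∈ R ⊗ R`. -/
lemma mem_RR (R : Submodule k P) (x : P) (hx : x ∉ R) {w : P ⊗[k] P}
    (hw1 : w ∈ LinearMap.range (TensorProduct.map R.subtype (Submodule.span k {x} ⊔ R).subtype))
    (hw2 : w ∈ LinearMap.range (TensorProduct.map (Submodule.span k {x} ⊔ R).subtype R.subtype)) :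
    w ∈ LinearMap.range (TensorProduct.map R.subtype R.subtype) := by
  set S := Submodule.span k {x} ⊔ R with hS
  obtain ⟨f, hfx, hfR⟩ := exists_fun R x hx
  set g : P →ₗ[k] P := LinearMap.id - LinearMap.toSpanSingleton k P x ∘ₗ f with hg
  have hgR : g ∘ₗ R.subtype = R.subtype := by
    ext r
    simp [hg, hfR r r.2]
  have hgS : ∀ s ∈ S, g s ∈ R := by
    intro s hs
    obtain ⟨y, hy, r, hr, rfl⟩ := Submodule.mem_sup.mp hs
    obtain ⟨c, rfl⟩ := Submodule.mem_span_singleton.mp hy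
    have : g (c • x + r) = r := by
      simp [hg, hfR r hr, hfx, mul_comm]
    rw [this]; exact hr
  set g' : S →ₗ[k] R := LinearMap.codRestrict R (g ∘ₗ S.subtype) (fun s => hgS s s.2) with hg'
  have hgS' : R.subtype ∘ₗ g' = g ∘ₗ S.subtype := LinearMap.subtype_comp_codRestrict _ _ _
  -- w is fixed by (id ⊗ g)
  obtain ⟨v, hv⟩ := hw2
  have hfix : TensorProduct.map LinearMap.id g w = w := by
    rw [← hv, ← LinearMap.comp_apply, ← TensorProduct.map_comp, LinearMap.id_comp, hgR]
  -- and (id ⊗ g) maps R ⊗ S into R ⊗ R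
  obtain ⟨u, hu⟩ := hw1
  refine ⟨TensorProduct.map LinearMap.id g' u, ?_⟩
  rw [← hfix, ← hu, ← LinearMap.comp_apply, ← LinearMap.comp_apply,
    ← TensorProduct.map_comp, ← TensorProduct.map_comp, LinearMap.id_comp,
    LinearMap.comp_id, hgS']

end Aux

theorem stmt12 {k : Type*} [Field k] {P : Type*} [AddCommGroup P] [Module k P]
    (dP : P →ₗ[k] P ⊗[k] P) (hP : Coassoc dP)
    -- `R` is a coideal of `P`
    (R : Submodule k P)
    (hR : ∀ p ∈ R, dP p ∈
      LinearMap.range (TensorProduct.map R.subtype (LinearMap.id (R := k) (M := P)))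
        ⊔ LinearMap.range (TensorProduct.map (LinearMap.id (R := k) (M := P)) R.subtype))
    -- `x ∈ P \ R`
    (x : P) (hx : x ∉ R)
    -- `Δ(x) - x ⊗ x ∈ R ⊗ R`
    (h1 : dP x - x ⊗ₜ[k] x ∈ LinearMap.range (TensorProduct.map R.subtype R.subtype))
    -- `Δ(p) - x ⊗ p ∈ R ⊗ (kx + R)` for all `p ∈ R`
    (h2 : ∀ p ∈ R, dP p - x ⊗ₜ[k] p ∈
      LinearMap.range (TensorProduct.map R.subtype (Submodule.span k {x} ⊔ R).subtype))
    -- `Δ(p) - p ⊗ x ∈ (kx + R) ⊗ R` for all `p ∈ R`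
    (h3 : ∀ p ∈ R, dP p - p ⊗ₜ[k] x ∈
      LinearMap.range (TensorProduct.map (Submodule.span k {x} ⊔ R).subtype R.subtype)) :
    -- then `T = k(1,x) + ({0} × R)` is a subcoalgebra of `k ⋉ P`
    ∀ t ∈ Submodule.span k {((1 : k), x)} ⊔ Submodule.map (LinearMap.inr k k P) R,
      counitComul dP t ∈ LinearMap.range (TensorProduct.map
        (Submodule.span k {((1 : k), x)} ⊔ Submodule.map (LinearMap.inr k k P) R).subtype
        (Submodule.span k {((1 : k), x)} ⊔ Submodule.map (LinearMap.inr k k P) R).subtype) := by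
  intro t ht
  set S := Submodule.span k {x} ⊔ R with hS
  set T := Submodule.span k {((1 : k), x)} ⊔ Submodule.map (LinearMap.inr k k P) R with hT
  have hT1 : ((1:k), x) ∈ T := Submodule.mem_sup_left (Submodule.mem_span_singleton_self _)
  have hTr : ∀ r ∈ R, ((0:k), r) ∈ T := fun r hr => Submodule.mem_sup_right ⟨r, hr, rfl⟩
  have hxS : x ∈ S := Submodule.mem_sup_left (Submodule.mem_span_singleton_self _)
  -- map inr inr sends R ⊗ R into T ⊗ T
  have key : ∀ z ∈ LinearMap.range (TensorProduct.map R.subtype R.subtype),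
      TensorProduct.map (LinearMap.inr k k P) (LinearMap.inr k k P) z ∈
        LinearMap.range (TensorProduct.map T.subtype T.subtype) := by
    rintro z ⟨u, rfl⟩
    set j : R →ₗ[k] T :=
      LinearMap.codRestrict T (LinearMap.inr k k P ∘ₗ R.subtype) (fun r => hTr r r.2) with hj
    refine ⟨TensorProduct.map j j u, ?_⟩
    rw [← LinearMap.comp_apply, ← LinearMap.comp_apply, ← TensorProduct.map_comp,
      ← TensorProduct.map_comp]
    rfl
  -- decompose t
  obtain ⟨y, hy, z, hz, rfl⟩ := Submodule.mem_sup.mp ht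
  obtain ⟨a, rfl⟩ := Submodule.mem_span_singleton.mp hy
  obtain ⟨r, hr, rfl⟩ := hz
  rw [map_add, map_smul]
  -- part A : Δ(1,x)
  have eA : counitComul dP ((1:k), x) = ((1:k),x) ⊗ₜ[k] ((1:k),x)
      + TensorProduct.map (LinearMap.inr k k P) (LinearMap.inr k k P) (dP x - x ⊗ₜ[k] x) := by
    rw [counitComul_apply]
    have hx1 : ((1:k), x) = ((1:k),(0:P)) + ((0:k), x) := by simp
    rw [map_sub, TensorProduct.map_tmul, hx1]
    simp only [TensorProduct.add_tmul, TensorProduct.tmul_add, one_smul,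
      LinearMap.inr_apply]
    abel
  have memA : counitComul dP ((1:k), x)
      ∈ LinearMap.range (TensorProduct.map T.subtype T.subtype) := by
    rw [eA]
    exact Submodule.add_mem _ (tmul_mem_range T hT1 hT1) (key _ h1)
  -- part B : Δ(0,r)
  have eB : counitComul dP ((LinearMap.inr k k P) r) = ((1:k),x) ⊗ₜ[k] ((0:k),r)
      + ((0:k),r) ⊗ₜ[k] ((1:k),x)
      + TensorProduct.map (LinearMap.inr k k P) (LinearMap.inr k k P)
          (dP r - x ⊗ₜ[k] r - r ⊗ₜ[k] x) := by
    have : (LinearMap.inr k k P) r = ((0:k), r) := rfl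
    rw [this, counitComul_apply]
    have hx1 : ((1:k), x) = ((1:k),(0:P)) + ((0:k), x) := by simp
    rw [map_sub, map_sub, TensorProduct.map_tmul, TensorProduct.map_tmul, hx1]
    simp only [TensorProduct.add_tmul, TensorProduct.tmul_add, zero_smul,
      LinearMap.inr_apply]
    abel
  have hwRR : dP r - x ⊗ₜ[k] r - r ⊗ₜ[k] x
      ∈ LinearMap.range (TensorProduct.map R.subtype R.subtype) := by
    refine mem_RR R x hx ?_ ?_
    · exact Submodule.sub_mem _ (h2 r hr)
        ⟨(⟨r, hr⟩ : R) ⊗ₜ[k] (⟨x, hxS⟩ : S), by simp⟩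
    · have : dP r - x ⊗ₜ[k] r - r ⊗ₜ[k] x = dP r - r ⊗ₜ[k] x - x ⊗ₜ[k] r := by abel
      rw [this]
      exact Submodule.sub_mem _ (h3 r hr)
        ⟨(⟨x, hxS⟩ : S) ⊗ₜ[k] (⟨r, hr⟩ : R), by simp⟩
  have memB : counitComul dP ((LinearMap.inr k k P) r)
      ∈ LinearMap.range (TensorProduct.map T.subtype T.subtype) := by
    rw [eB]
    exact Submodule.add_mem _ (Submodule.add_mem _
      (tmul_mem_range T hT1 (hTr r hr)) (tmul_mem_range T (hTr r hr) hT1))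
      (key _ hwRR)
  exact Submodule.add_mem _ (Submodule.smul_mem _ a memA) memB
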